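/- arXiv:1509.05476 — 4 statements merged into one kernel-verified Lean document; each statement's English description precedes it below -/
import Mathlib

section
/- If G is an r-regular simple graph on n vertices with n even and r < n/2, then there exists an (r+1)-regular simple graph on the same vertex set whose edge set contains the edge set of G. -/
open Finset

lemma even_card_aux {V : Type*} [DecidableEq V] (f : V → V) :
    ∀ s : Finset V, (∀ x ∈ s, f x ∈ s) → (∀ x ∈ s, f (f x) = x) → (∀ x ∈ s, f x ≠ x) →
      Even s.card := by
  intro s
  induction s using Finset.strongInduction with
  | _ s ih =>
    intro hcl hinv hne
    rcases s.eq_empty_or_nonempty with rfl | ⟨x, hx⟩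
    · simp
    have hfx : f x ∈ s := hcl x hx
    have hxne : f x ≠ x := hne x hx
    have hpair : ({x, f x} : Finset V) ⊆ s := by
      intro y hy; rcases Finset.mem_insert.1 hy with rfl | hy
      · exact hx
      · simpa using Finset.mem_singleton.1 hy ▸ hfx
    set t := s \ {x, f x} with ht
    have hssub : t ⊂ s := by
      refine Finset.ssubset_iff_of_subset (Finset.sdiff_subset) |>.2 ⟨x, hx, ?_⟩
      simp [ht]
    have htmem : ∀ y ∈ t, y ∈ s ∧ y ≠ x ∧ y ≠ f x := by
      intro y hy
      have := Finset.mem_sdiff.1 hy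
      simp only [Finset.mem_insert, Finset.mem_singleton] at this
      tauto
    have hte : Even t.card := by
      refine ih t hssub ?_ ?_ ?_
      · intro y hy
        obtain ⟨hys, hyx, hyfx⟩ := htmem y hy
        refine Finset.mem_sdiff.2 ⟨hcl y hys, ?_⟩
        simp only [Finset.mem_insert, Finset.mem_singleton]
        push_neg
        constructor
        · intro h; exact hyfx (by rw [← h, hinv y hys])
        · intro h
          have := hinv y hys
          have := hinv x hx
          apply hyx
          have : f (f y) = f (f x) := by rw [h]
          rwa [hinv y hys, hinv x hx] at this
      · intro y hy; exact hinv y (htmem y hy).1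
      · intro y hy; exact hne y (htmem y hy).1
    have hcard : s.card = t.card + 2 := by
      have h2 : ({x, f x} : Finset V).card = 2 := by
        rw [Finset.card_insert_of_notMem (by simpa using hxne.symm)]; simp
      have h3 : t.card + 2 = s.card := by
        rw [ht, ← h2]
        exact Finset.card_sdiff_add_card_eq_card hpair
      omega
    rw [hcard]
    obtain ⟨k, hk⟩ := hte
    exact ⟨k + 1, by omega⟩

/-- A graph with all degrees at least `n/2` on an even number of vertices has a
perfect matching, given as a fixed-point-free involution through edges. -/
lemma perfect_matching_aux {V : Type*} [Fintype V] (H : SimpleGraph V)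
    (heven : Even (Fintype.card V))
    (hdeg : ∀ v : V, Fintype.card V ≤ 2 * (H.neighborSet v).ncard) :
    ∃ f : V → V, (∀ v, f (f v) = v) ∧ (∀ v, f v ≠ v) ∧ (∀ v, H.Adj v (f v)) := by
  classical
  set n := Fintype.card V with hn
  -- degree as a filter card
  have hdeg' : ∀ v : V, (univ.filter (fun w => H.Adj v w)).card = (H.neighborSet v).ncard := by
    intro v
    rw [Set.ncard_eq_toFinset_card']
    congr 1
    ext w
    rw [Set.mem_toFinset]
    simp [SimpleGraph.neighborSet]
  set valid : (V → V) → Prop := fun f => (∀ v, f (f v) = v) ∧ (∀ v, f v ≠ v → H.Adj v (f v))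
    with hvalid
  set mv : (V → V) → Finset V := fun f => univ.filter (fun v => f v ≠ v) with hmv
  have hidval : valid id := ⟨fun v => rfl, fun v h => absurd rfl h⟩
  set S : Finset (V → V) := univ.filter valid with hS
  obtain ⟨f, hfS, hmax⟩ := Finset.exists_max_image S (fun f => (mv f).card)
    ⟨id, Finset.mem_filter.2 ⟨Finset.mem_univ _, hidval⟩⟩
  have hfval : valid f := (Finset.mem_filter.1 hfS).2
  obtain ⟨hinv, hadj⟩ := hfval
  -- it suffices to show f has no fixed points
  by_cases hfix : ∀ v, f v ≠ v
  · exact ⟨f, hinv, hfix, fun v => hadj v (hfix v)⟩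
  exfalso
  push_neg at hfix
  obtain ⟨u, hu⟩ := hfix
  -- the moved set is closed under f and even
  have hmvcl : ∀ x ∈ mv f, f x ∈ mv f := by
    intro x hx
    simp only [hmv, Finset.mem_filter, Finset.mem_univ, true_and] at hx ⊢
    intro h
    exact hx (by rw [← h, hinv x])
  have hmveven : Even (mv f).card := by
    refine even_card_aux f (mv f) hmvcl ?_ ?_
    · intro x _; exact hinv x
    · intro x hx; simpa [hmv] using hx
  -- extension step: no fixed point other than a is adjacent to a fixed point a
  have hext : ∀ a b : V, f a = a → f b = b → ¬ H.Adj a b := by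
    intro a b ha hb hAdj
    have hab : a ≠ b := H.ne_of_adj hAdj
    set g : V → V := fun z => if z = a then b else if z = b then a else f z with hg
    have hgval : valid g := by
      constructor
      · intro v
        by_cases h1 : v = a
        · simp [hg, h1, hab.symm, hab]
        · by_cases h2 : v = b
          · simp [hg, h1, h2, hab]
          · simp only [hg, h1, h2, if_false]
            have hfv1 : f v ≠ a := fun h => h1 (by rw [← hinv v, h, ha])
            have hfv2 : f v ≠ b := fun h => h2 (by rw [← hinv v, h, hb])
            simp [hfv1, hfv2, hinv v]
      · intro v hv
        by_cases h1 : v = a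
        · subst h1; simpa [hg] using hAdj
        · by_cases h2 : v = b
          · subst h2; simpa [hg, h1] using hAdj.symm
          · simp only [hg, h1, h2, if_false] at hv ⊢
            exact hadj v hv
    have hsub : mv f ⊆ mv g := by
      intro z hz
      simp only [hmv, Finset.mem_filter, Finset.mem_univ, true_and] at hz ⊢
      have hz1 : z ≠ a := fun h => hz (h ▸ ha)
      have hz2 : z ≠ b := fun h => hz (h ▸ hb)
      simpa [hg, hz1, hz2] using hz
    have hamem : a ∈ mv g := by
      simp [hmv, hg, Ne.symm hab]
    have hanot : a ∉ mv f := by simp [hmv, ha]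
    have : (mv g).card > (mv f).card :=
      Finset.card_lt_card (Finset.ssubset_iff_of_subset hsub |>.2 ⟨a, hamem, hanot⟩)
    have hgS : g ∈ S := Finset.mem_filter.2 ⟨Finset.mem_univ _, hgval⟩
    exact absurd (hmax g hgS) (by omega)
  -- there is a second fixed point v ≠ u
  have hfixset : (univ.filter (fun v => f v = v)).card + (mv f).card = n := by
    rw [hmv, hn]
    rw [Finset.card_filter_add_card_filter_not (fun v => f v = v)]
    · simp
  have hfixeven : Even (univ.filter (fun v => f v = v)).card := by
    obtain ⟨k1, hk1⟩ := heven
    obtain ⟨k2, hk2⟩ := hmveven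
    exact ⟨k1 - k2, by omega⟩
  have humem : u ∈ univ.filter (fun v => f v = v) := by simp [hu]
  obtain ⟨v, hvmem, hvu⟩ : ∃ v ∈ univ.filter (fun w => f w = w), v ≠ u := by
    by_contra hcon
    push_neg at hcon
    have : univ.filter (fun v => f v = v) = {u} := by
      apply Finset.eq_singleton_iff_unique_mem.2 ⟨humem, fun w hw => hcon w hw⟩
    rw [this] at hfixeven
    simp at hfixeven
  have hv : f v = v := by simpa using hvmem
  -- counting function
  set c : V → ℕ := fun x => (if H.Adj u x then 1 else 0) + (if H.Adj v x then 1 else 0) with hc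
  have hcfix : ∀ x, f x = x → c x = 0 := by
    intro x hxf
    have h1 : ¬ H.Adj u x := hext u x hu hxf
    have h2 : ¬ H.Adj v x := hext v x hv hxf
    simp [hc, h1, h2]
  have hsumall : ∑ x ∈ univ, c x = (H.neighborSet u).ncard + (H.neighborSet v).ncard := by
    rw [← hdeg' u, ← hdeg' v, Finset.card_filter, Finset.card_filter, ← Finset.sum_add_distrib]
  have hcmoved : ∑ x ∈ mv f, c x = ∑ x ∈ univ, c x := by
    apply Finset.sum_subset (Finset.subset_univ _)
    intro x _ hx
    apply hcfix
    by_contra h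
    exact hx (by simp [hmv, h])
  have hsumge : n ≤ ∑ x ∈ mv f, c x := by
    rw [hcmoved, hsumall]
    have h1 := hdeg u
    have h2 := hdeg v
    omega
  -- the 4-point surgery contradiction
  have swap2 : ∀ x : V, f x ≠ x → H.Adj u x → H.Adj v (f x) → False := by
    intro x hxx hux hvfx
    obtain ⟨y, hy⟩ : ∃ y, f x = y := ⟨f x, rfl⟩
    have hyy : f y = x := by rw [← hy, hinv x]
    have hxy : x ≠ y := fun h => hxx (hy.trans h.symm)
    have hvy : H.Adj v y := hy ▸ hvfx
    have hxu : x ≠ u := fun h => hxx (by rw [h, hu])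
    have hyu : y ≠ u := fun h => hxy (by rw [← hyy, h, hu])
    have hxv : x ≠ v := fun h => hxx (by rw [h, hv])
    have hyv : y ≠ v := fun h => hxy (by rw [← hyy, h, hv])
    have huv : u ≠ v := Ne.symm hvu
    set g : V → V := fun z => if z = u then x else if z = x then u else
        if z = v then y else if z = y then v else f z with hg
    have hgu : g u = x := by simp [hg]
    have hgx : g x = u := by simp [hg, hxu]
    have hgv : g v = y := by simp [hg, Ne.symm hxv, huv.symm]
    have hgy : g y = v := by simp [hg, hyu, Ne.symm hxy, hyv]
    have hgelse : ∀ z, z ≠ u → z ≠ x → z ≠ v → z ≠ y → g z = f z := by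
      intro z h1 h2 h3 h4; simp [hg, h1, h2, h3, h4]
    have hgval : valid g := by
      constructor
      · intro z
        by_cases h1 : z = u
        · rw [h1, hgu, hgx]
        by_cases h2 : z = x
        · rw [h2, hgx, hgu]
        by_cases h3 : z = v
        · rw [h3, hgv, hgy]
        by_cases h4 : z = y
        · rw [h4, hgy, hgv]
        · rw [hgelse z h1 h2 h3 h4]
          have k1 : f z ≠ u := fun h => h1 (by rw [← hinv z, h, hu])
          have k2 : f z ≠ x := fun h => h4 (by rw [← hinv z, h]; exact hy)
          have k3 : f z ≠ v := fun h => h3 (by rw [← hinv z, h, hv])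
          have k4 : f z ≠ y := fun h => h2 (by rw [← hinv z, h, hyy])
          rw [hgelse (f z) k1 k2 k3 k4, hinv z]
      · intro z hz
        by_cases h1 : z = u
        · rw [h1, hgu]; exact h1 ▸ hux
        by_cases h2 : z = x
        · rw [h2, hgx]; exact h2 ▸ hux.symm
        by_cases h3 : z = v
        · rw [h3, hgv]; exact hvy
        by_cases h4 : z = y
        · rw [h4, hgy]; exact hvy.symm
        · rw [hgelse z h1 h2 h3 h4] at hz ⊢
          exact hadj z hz
    have hsub : mv f ⊆ mv g := by
      intro z hz
      simp only [hmv, Finset.mem_filter, Finset.mem_univ, true_and] at hz ⊢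
      by_cases h1 : z = u
      · exact absurd (h1 ▸ hu) (h1 ▸ hz)
      by_cases h3 : z = v
      · exact absurd (h3 ▸ hv) (h3 ▸ hz)
      by_cases h2 : z = x
      · rw [h2, hgx]; exact Ne.symm hxu
      by_cases h4 : z = y
      · rw [h4, hgy]; exact Ne.symm hyv
      · rw [hgelse z h1 h2 h3 h4]; exact hz
    have humv : u ∈ mv g := by
      simp only [hmv, Finset.mem_filter, Finset.mem_univ, true_and]
      rw [hgu]; exact hxu
    have hunot : u ∉ mv f := by simp [hmv, hu]
    have hlt : (mv f).card < (mv g).card :=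
      Finset.card_lt_card (Finset.ssubset_iff_of_subset hsub |>.2 ⟨u, humv, hunot⟩)
    have hgS : g ∈ S := Finset.mem_filter.2 ⟨Finset.mem_univ _, hgval⟩
    exact absurd (hmax g hgS) (by omega)
  -- pigeonhole: some pair admits the surgery
  by_cases hbig : ∃ x ∈ mv f, 3 ≤ c x + c (f x)
  · obtain ⟨x, hxm, hcx⟩ := hbig
    have hxx : f x ≠ x := by simpa [hmv] using hxm
    have hor : (H.Adj u x ∧ H.Adj v (f x)) ∨ (H.Adj u (f x) ∧ H.Adj v x) := by
      by_cases h1 : H.Adj u x <;> by_cases h2 : H.Adj v x <;>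
        by_cases h3 : H.Adj u (f x) <;> by_cases h4 : H.Adj v (f x) <;>
        first
          | exact Or.inl ⟨h1, h4⟩
          | exact Or.inr ⟨h3, h2⟩
          | (exfalso; simp [hc, h1, h2, h3, h4] at hcx)
          | (exfalso; simp [hc, h1, h2, h3, h4] at hcx; omega)
    rcases hor with ⟨hux, hvfx⟩ | ⟨hufx, hvx⟩
    · exact swap2 x hxx hux hvfx
    · refine swap2 (f x) ?_ hufx ?_
      · rw [hinv x]; exact Ne.symm hxx
      · rw [hinv x]; exact hvx
  · push_neg at hbig
    have hbig' : ∀ x ∈ mv f, c x + c (f x) ≤ 2 := fun x hx => by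
      have := hbig x hx; omega
    have h1 : ∑ x ∈ mv f, (c x + c (f x)) ≤ 2 * (mv f).card := by
      calc ∑ x ∈ mv f, (c x + c (f x)) ≤ ∑ _x ∈ mv f, 2 := Finset.sum_le_sum hbig'
        _ = 2 * (mv f).card := by rw [Finset.sum_const, smul_eq_mul, mul_comm]
    have h2 : ∑ x ∈ mv f, c (f x) = ∑ x ∈ mv f, c x := by
      apply Finset.sum_nbij' (i := f) (j := f) <;> intro a ha
      · exact hmvcl a ha
      · exact hmvcl a ha
      · exact hinv a
      · exact hinv a
      · rfl
    have h3 : (mv f).card ≤ n - 2 := by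
      have hsub : mv f ⊆ univ \ {u, v} := by
        intro z hz
        simp only [hmv, Finset.mem_filter, Finset.mem_univ, true_and] at hz
        simp only [Finset.mem_sdiff, Finset.mem_univ, true_and, Finset.mem_insert,
          Finset.mem_singleton]
        push_neg
        exact ⟨fun h => hz (h ▸ hu), fun h => hz (h ▸ hv)⟩
      have := Finset.card_le_card hsub
      have hcard2 : ({u, v} : Finset V).card = 2 := by
        rw [Finset.card_insert_of_notMem (by simpa using Ne.symm hvu)]; simp
      rw [Finset.card_sdiff_of_subset (Finset.subset_univ _), hcard2, Finset.card_univ, ← hn] at this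
      exact this
    have hnpos : 0 < n := by rw [hn]; exact Fintype.card_pos_iff.2 ⟨u⟩
    rw [Finset.sum_add_distrib, h2] at h1
    omega

/-- If `G` is `r`-regular with `n` even and `r < n/2`, then `G` extends to an
`(r+1)`-regular graph on the same vertex set. -/
theorem stmt_1 {V : Type*} [Fintype V] (G : SimpleGraph V) (r : ℕ)
    (hreg : ∀ v : V, (G.neighborSet v).ncard = r)
    (heven : Even (Fintype.card V))
    (hr : 2 * r < Fintype.card V) :
    ∃ G' : SimpleGraph V, G ≤ G' ∧ ∀ v : V, (G'.neighborSet v).ncard = r + 1 := by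
  classical
  set n := Fintype.card V with hn
  have hd : ∀ (H : SimpleGraph V) (v : V), (H.neighborSet v).ncard = H.degree v := by
    intro H v
    rw [← SimpleGraph.card_neighborSet_eq_degree, Set.ncard_eq_toFinset_card', Set.toFinset_card]
  have hcompl : ∀ v : V, (Gᶜ.neighborSet v).ncard = n - 1 - r := by
    intro v
    rw [hd, SimpleGraph.degree_compl, ← hd, hreg v]
  have hdeg : ∀ v : V, n ≤ 2 * (Gᶜ.neighborSet v).ncard := by
    intro v; rw [hcompl v]
    obtain ⟨k, hk⟩ := heven
    omega
  obtain ⟨f, hinv, hne, hadj⟩ := perfect_matching_aux Gᶜ heven hdeg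
  set M : SimpleGraph V := { Adj := fun a b => f a = b
                             symm := ⟨by intro a b h; rw [← h, hinv a]⟩
                             loopless := ⟨fun a h => hne a h⟩ } with hM
  refine ⟨G ⊔ M, le_sup_left, ?_⟩
  intro v
  have hns : (G ⊔ M).neighborSet v = insert (f v) (G.neighborSet v) := by
    ext w
    simp only [SimpleGraph.neighborSet, SimpleGraph.sup_adj, Set.mem_setOf_eq, Set.mem_insert_iff]
    constructor
    · rintro (h | h)
      · exact Or.inr h
      · exact Or.inl (Eq.symm h)
    · rintro (rfl | h)
      · exact Or.inr (by simp [hM])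
      · exact Or.inl h
  rw [hns]
  have hnotmem : f v ∉ G.neighborSet v := by
    intro h
    have := hadj v
    rw [SimpleGraph.compl_adj] at this
    exact this.2 h
  rw [Set.ncard_insert_of_notMem hnotmem (Set.toFinite _), hreg v]
end

section
/- Let n be even and G an r-regular graph on n vertices with r ≥ n/2. If G contains as a spanning induced subgraph a complete bipartite graph whose two parts both have odd cardinality, then the complement of G has no perfect matching; hence G cannot be extended to an (r+1)-regular graph on the same vertices. -/
/-- If `G` is `r`-regular with `n` even, `r ≥ n/2`, and `G` contains a spanning
induced complete bipartite subgraph with both parts of odd size, then `Gᶜ` has no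
perfect matching and `G` cannot be extended to an `(r+1)`-regular graph. -/
theorem stmt_8 {V : Type*} [Fintype V] (G : SimpleGraph V) (r : ℕ)
    (hreg : ∀ v : V, (G.neighborSet v).ncard = r)
    (heven : Even (Fintype.card V))
    (hr : Fintype.card V ≤ 2 * r)
    (A : Set V) (hAodd : Odd A.ncard) (hAcodd : Odd (Aᶜ : Set V).ncard)
    (hbip : ∀ a ∈ A, ∀ b ∈ (Aᶜ : Set V), G.Adj a b) :
    (¬ ∃ M : Gᶜ.Subgraph, M.IsPerfectMatching) ∧
      ¬ ∃ G' : SimpleGraph V, G ≤ G' ∧ ∀ v : V, (G'.neighborSet v).ncard = r + 1 := by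
  classical
  have key : ¬ ∃ M : Gᶜ.Subgraph, M.IsPerfectMatching := by
    rintro ⟨M, hM⟩
    rw [SimpleGraph.Subgraph.isPerfectMatching_iff] at hM
    have hpart : ∀ v ∈ A, ∀ w, M.Adj v w → w ∈ A := by
      intro v hv w hvw
      by_contra hw
      have h1 : Gᶜ.Adj v w := M.adj_sub hvw
      exact h1.2 (hbip v hv w hw)
    let M' : Gᶜ.Subgraph :=
      { verts := A
        Adj := fun v w => M.Adj v w ∧ v ∈ A ∧ w ∈ A
        adj_sub := fun h => M.adj_sub h.1
        edge_vert := fun h => h.2.1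
        symm := ⟨fun v w h => ⟨h.1.symm, h.2.2, h.2.1⟩⟩ }
    have hM' : M'.IsMatching := by
      intro v hv
      obtain ⟨w, hw, huniq⟩ := hM v
      refine ⟨w, ⟨hw, hv, hpart v hv w hw⟩, fun y hy => huniq y hy.1⟩
    have heq : M'.verts = A := rfl
    have := hM'.even_card
    rw [Set.toFinset_card] at this
    rw [Set.ncard_eq_toFinset_card', Set.toFinset_card] at hAodd
    rw [heq] at this
    exact (Nat.not_even_iff_odd.mpr hAodd) this
  refine ⟨key, ?_⟩
  rintro ⟨G', hle, hreg'⟩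
  apply key
  have huniq : ∀ v : V, ∃! w, G'.Adj v w ∧ ¬ G.Adj v w := by
    intro v
    have hsub : G.neighborSet v ⊆ G'.neighborSet v := fun w hw => hle hw
    have hd : (G'.neighborSet v \ G.neighborSet v).ncard = 1 := by
      rw [Set.ncard_diff hsub (Set.toFinite _), hreg v, hreg' v]; omega
    obtain ⟨a, ha⟩ := Set.ncard_eq_one.mp hd
    have hmem : ∀ w, (G'.Adj v w ∧ ¬ G.Adj v w) ↔ w ∈ (G'.neighborSet v \ G.neighborSet v) := by
      intro w; rfl
    refine ⟨a, ?_, ?_⟩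
    · exact (hmem a).mpr (ha ▸ rfl)
    · intro y hy; have := (hmem y).mp hy; rw [ha] at this; exact this
  let M : Gᶜ.Subgraph :=
    { verts := Set.univ
      Adj := fun v w => G'.Adj v w ∧ ¬ G.Adj v w
      adj_sub := fun h => (SimpleGraph.compl_adj _ _ _).mpr ⟨h.1.ne, h.2⟩
      edge_vert := fun _ => Set.mem_univ _
      symm := ⟨fun v w h => ⟨h.1.symm, fun hc => h.2 hc.symm⟩⟩ }
  exact ⟨M, SimpleGraph.Subgraph.isPerfectMatching_iff.mpr huniq⟩
end

section
/- Let G be an r-regular simple graph on n vertices, n even, r ≥ n/2, containing a complete subgraph K_{n/2} on half the vertices. Then for every r' with r ≤ r' ≤ n - 1, there exists an r'-regular graph on the same vertex set whose edge set contains that of G. -/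
theorem extend_one {V : Type*} [Fintype V] (G : SimpleGraph V) (r : ℕ)
    (hreg : ∀ v : V, (G.neighborSet v).ncard = r)
    (A : Set V) (hAcard : 2 * A.ncard = Fintype.card V)
    (hclique : ∀ a ∈ A, ∀ b ∈ A, a ≠ b → G.Adj a b)
    (hlt : r + 1 ≤ Fintype.card V - 1) :
    ∃ G' : SimpleGraph V, G ≤ G' ∧ ∀ v : V, (G'.neighborSet v).ncard = r + 1 := by
  classical
  set n := Fintype.card V with hn
  have hdeg : ∀ v, G.degree v = r := by
    intro v
    rw [SimpleGraph.degree, SimpleGraph.neighborFinset, ← Set.ncard_eq_toFinset_card']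
    exact hreg v
  set d := n - 1 - r with hd
  have hcd : ∀ v, Gᶜ.degree v = d := by
    intro v; rw [SimpleGraph.degree_compl, hdeg]
  have hd1 : 1 ≤ d := by omega
  -- Hall's condition
  set t : A → Finset V := fun a => Gᶜ.neighborFinset a with ht
  have hall : ∀ S : Finset A, S.card ≤ (S.biUnion t).card := by
    intro S
    have key : d * S.card ≤ d * (S.biUnion t).card := by
      calc d * S.card = ∑ _a ∈ S, d := by rw [Finset.sum_const, smul_eq_mul, mul_comm]
        _ = ∑ a ∈ S, (t a).card := by
            refine Finset.sum_congr rfl fun a _ => ?_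
            exact (hcd a).symm
        _ = ∑ a ∈ S, ((S.biUnion t).filter (· ∈ t a)).card := by
            refine Finset.sum_congr rfl fun a ha => ?_
            congr 1
            ext b
            simp only [Finset.mem_filter, Finset.mem_biUnion]
            exact ⟨fun h => ⟨⟨a, ha, h⟩, h⟩, fun h => h.2⟩
        _ = ∑ a ∈ S, ∑ b ∈ S.biUnion t, if b ∈ t a then 1 else 0 := by
            refine Finset.sum_congr rfl fun a _ => ?_
            rw [Finset.card_filter]
        _ = ∑ b ∈ S.biUnion t, ∑ a ∈ S, if b ∈ t a then 1 else 0 := Finset.sum_comm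
        _ = ∑ b ∈ S.biUnion t, (S.filter (fun a => b ∈ t a)).card := by
            refine Finset.sum_congr rfl fun b _ => ?_
            rw [Finset.card_filter]
        _ ≤ ∑ _b ∈ S.biUnion t, d := by
            refine Finset.sum_le_sum fun b _ => ?_
            calc (S.filter (fun a => b ∈ t a)).card
                ≤ (Gᶜ.neighborFinset b).card := by
                  refine Finset.card_le_card_of_injOn (fun a => (a : V)) ?_ ?_
                  · intro a ha
                    simp only [Finset.mem_coe, Finset.mem_filter] at ha
                    have : Gᶜ.Adj a b := by
                      simpa [ht, SimpleGraph.mem_neighborFinset] using ha.2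
                    simpa [SimpleGraph.mem_neighborFinset] using this.symm
                  · intro a _ a' _ h; exact Subtype.ext h
              _ = d := hcd b
        _ = d * (S.biUnion t).card := by rw [Finset.sum_const, smul_eq_mul, mul_comm]
    exact Nat.le_of_mul_le_mul_left key hd1
  obtain ⟨f, hfinj, hf⟩ := (Finset.all_card_le_biUnion_card_iff_exists_injective t).mp hall
  have hfadj : ∀ a : A, Gᶜ.Adj a (f a) := by
    intro a
    have := hf a
    simpa [ht, SimpleGraph.mem_neighborFinset] using this
  have hfB : ∀ a : A, f a ∈ (Aᶜ : Set V) := by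
    intro a
    intro hfa
    exact (hfadj a).2 (hclique a a.2 (f a) hfa (hfadj a).ne)
  set g : A → (Aᶜ : Set V) := fun a => ⟨f a, hfB a⟩ with hg
  have hginj : Function.Injective g := fun a a' h => hfinj (congrArg Subtype.val h)
  have hcardA : Nat.card A = A.ncard := Nat.card_coe_set_eq A
  have hcards : Fintype.card A = Fintype.card (Aᶜ : Set V) := by
    have h1 : A.ncard + (Aᶜ : Set V).ncard = n := by
      rw [Set.ncard_add_ncard_compl, Nat.card_eq_fintype_card]
    have h2 : Fintype.card A = A.ncard := by
      rw [← Nat.card_coe_set_eq, Nat.card_eq_fintype_card]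
    have h3 : Fintype.card (Aᶜ : Set V) = (Aᶜ : Set V).ncard := by
      rw [← Nat.card_coe_set_eq, Nat.card_eq_fintype_card]
    omega
  have hgbij : Function.Bijective g :=
    (Fintype.bijective_iff_injective_and_card g).mpr ⟨hginj, hcards⟩
  set e := Equiv.ofBijective g hgbij with he
  have hecoe : ∀ a : A, (e a : V) = f a := fun a => rfl
  -- the matching function
  set m : V → V := fun v => if h : v ∈ A then (e ⟨v, h⟩ : V) else (e.symm ⟨v, h⟩ : V) with hm
  have hmA : ∀ (v : V) (h : v ∈ A), m v = (e ⟨v, h⟩ : V) := fun v h => dif_pos h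
  have hmB : ∀ (v : V) (h : v ∉ A), m v = (e.symm ⟨v, h⟩ : V) := fun v h => dif_neg h
  have hmadj : ∀ v, Gᶜ.Adj v (m v) := by
    intro v
    by_cases h : v ∈ A
    · rw [hmA v h, hecoe]
      exact hfadj ⟨v, h⟩
    · rw [hmB v h]
      have : e (e.symm ⟨v, h⟩) = ⟨v, h⟩ := e.apply_symm_apply _
      have hv : f (e.symm ⟨v, h⟩) = v := by
        have := congrArg Subtype.val this
        rwa [hecoe] at this
      have := hfadj (e.symm ⟨v, h⟩)
      rw [hv] at this
      exact this.symm
  have hmm : ∀ v, m (m v) = v := by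
    intro v
    by_cases h : v ∈ A
    · have h1 : m v = (e ⟨v, h⟩ : V) := hmA v h
      have h2 : m v ∉ A := by rw [h1]; exact (e ⟨v, h⟩).2
      rw [hmB (m v) h2]
      have : (⟨m v, h2⟩ : (Aᶜ : Set V)) = e ⟨v, h⟩ := Subtype.ext h1
      rw [this, e.symm_apply_apply]
    · have h1 : m v = (e.symm ⟨v, h⟩ : V) := hmB v h
      have h2 : m v ∈ A := by rw [h1]; exact (e.symm ⟨v, h⟩).2
      rw [hmA (m v) h2]
      have : (⟨m v, h2⟩ : A) = e.symm ⟨v, h⟩ := Subtype.ext h1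
      rw [this, e.apply_symm_apply]
  have hmne : ∀ v, m v ≠ v := fun v => (hmadj v).ne'
  refine ⟨G ⊔ SimpleGraph.fromRel (fun x y => m x = y), le_sup_left, ?_⟩
  intro v
  have hNS : (G ⊔ SimpleGraph.fromRel fun x y => m x = y).neighborSet v
      = insert (m v) (G.neighborSet v) := by
    ext w
    simp only [SimpleGraph.mem_neighborSet, SimpleGraph.sup_adj, SimpleGraph.fromRel_adj,
      Set.mem_insert_iff]
    constructor
    · rintro (h | ⟨hne, h | h⟩)
      · exact Or.inr h
      · exact Or.inl h.symm
      · refine Or.inl ?_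
        rw [← h, hmm]
    · rintro (h | h)
      · subst h
        exact Or.inr ⟨fun h => hmne v h.symm, Or.inl rfl⟩
      · exact Or.inl h
  rw [hNS, Set.ncard_insert_of_notMem, hreg]
  exact fun hmem => (hmadj v).2 hmem

/-- If `G` is `r`-regular with `n` even, `r ≥ n/2`, and contains a clique on half
the vertices, then for every `r'` with `r ≤ r' ≤ n - 1` there is an `r'`-regular
graph on the same vertex set containing `G`. -/
theorem stmt_11 {V : Type*} [Fintype V] (G : SimpleGraph V) (r : ℕ)
    (hreg : ∀ v : V, (G.neighborSet v).ncard = r)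
    (heven : Even (Fintype.card V))
    (hr : Fintype.card V ≤ 2 * r)
    (A : Set V) (hAcard : 2 * A.ncard = Fintype.card V)
    (hclique : ∀ a ∈ A, ∀ b ∈ A, a ≠ b → G.Adj a b) :
    ∀ r' : ℕ, r ≤ r' → r' ≤ Fintype.card V - 1 →
      ∃ G' : SimpleGraph V, G ≤ G' ∧ ∀ v : V, (G'.neighborSet v).ncard = r' := by
  intro r' hrr'
  induction r', hrr' using Nat.le_induction with
  | base => exact fun _ => ⟨G, le_refl G, hreg⟩
  | succ k hk IH =>
    intro hk1
    obtain ⟨G', hle, hreg'⟩ := IH (by omega)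
    obtain ⟨G'', hle', hreg''⟩ := extend_one G' k hreg' A hAcard
      (fun a ha b hb hne => hle (hclique a ha b hb hne)) hk1
    exact ⟨G'', le_trans hle hle', hreg''⟩
end

section
/- Let G be an r-regular graph with r odd and let C be a connected component of G - S for some vertex set S, with C having y vertices, 1 ≤ y ≤ r. Then the number of edges of G joining C to S is at least y(r - y + 1), and hence at least r. -/
open Finset

/-- Let `G` be `r`-regular with `r` odd, `S` a vertex set, and `C` a connected
component of `G - S` with `y` vertices, `1 ≤ y ≤ r`. Then the number of edges of `G`
joining `C` to `S` is at least `y * (r - y + 1)`, hence at least `r`. -/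
theorem stmt_13 {V : Type*} [Fintype V] (G : SimpleGraph V) (r : ℕ)
    (hreg : ∀ v : V, (G.neighborSet v).ncard = r) (hodd : Odd r)
    (S : Set V) (C : (G.induce (Sᶜ : Set V)).ConnectedComponent) (y : ℕ)
    (hy : Nat.card C.supp = y) (hy1 : 1 ≤ y) (hyr : y ≤ r) :
    y * (r - y + 1) ≤
        {p : V × V | p.1 ∈ Subtype.val '' C.supp ∧ p.2 ∈ S ∧ G.Adj p.1 p.2}.ncard ∧
      r ≤ {p : V × V | p.1 ∈ Subtype.val '' C.supp ∧ p.2 ∈ S ∧ G.Adj p.1 p.2}.ncard := by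
  classical
  set C' : Set V := Subtype.val '' C.supp with hC'
  -- the component is closed under adjacency within Sᶜ
  have hclosed : ∀ v w : V, v ∈ C' → w ∉ S → G.Adj v w → w ∈ C' := by
    rintro v w ⟨⟨v', hv'⟩, hvC, rfl⟩ hwS hadj
    have hwS' : w ∈ (Sᶜ : Set V) := hwS
    refine ⟨⟨w, hwS'⟩, ?_, rfl⟩
    have hadj' : (G.induce (Sᶜ : Set V)).Adj ⟨v', hv'⟩ ⟨w, hwS'⟩ := by
      simpa using hadj
    have hmk := SimpleGraph.ConnectedComponent.sound hadj'.reachable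
    rw [SimpleGraph.ConnectedComponent.mem_supp_iff] at *
    rw [← hmk]; exact hvC
  have hfin : C'.Finite := Set.toFinite _
  set Cf : Finset V := hfin.toFinset with hCf
  have hmemCf : ∀ v, v ∈ Cf ↔ v ∈ C' := fun v => hfin.mem_toFinset
  have hncard : C'.ncard = y := by
    rw [hC', Set.ncard_image_of_injective _ Subtype.val_injective,
      ← Nat.card_coe_set_eq, hy]
  have hCfcard : Cf.card = y := by
    rw [← hncard, Set.ncard_eq_toFinset_card _ hfin]
  set Ns : V → Finset V := fun v => univ.filter (fun w => w ∈ S ∧ G.Adj v w) with hNs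
  set Tf : Finset (V × V) := Cf.biUnion (fun v => {v} ×ˢ Ns v) with hTf
  -- identify the set with Tf
  have hset : {p : V × V | p.1 ∈ C' ∧ p.2 ∈ S ∧ G.Adj p.1 p.2} = ↑Tf := by
    ext ⟨a, b⟩
    simp only [Set.mem_setOf_eq, hTf, coe_biUnion, Set.mem_iUnion, mem_coe,
      mem_product, mem_singleton, hNs, mem_filter, mem_univ, true_and]
    constructor
    · rintro ⟨h1, h2, h3⟩
      exact ⟨a, (hmemCf a).2 h1, rfl, h2, h3⟩
    · rintro ⟨v, hv, rfl, h2, h3⟩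
      exact ⟨(hmemCf a).1 hv, h2, h3⟩
  have hcardT : Tf.card = ∑ v ∈ Cf, (Ns v).card := by
    rw [hTf, card_biUnion]
    · refine Finset.sum_congr rfl fun v _ => ?_
      simp [card_product]
    · intro v hv w hw hvw
      simp only [Finset.disjoint_left, mem_product, mem_singleton]
      rintro ⟨a, b⟩ ⟨rfl, _⟩ ⟨rfl, _⟩
      exact hvw rfl
  -- per-vertex lower bound
  have hvert : ∀ v ∈ Cf, r - y + 1 ≤ (Ns v).card := by
    intro v hv
    have hdeg : (G.neighborFinset v).card = r := by
      rw [SimpleGraph.neighborFinset_def, ← Set.ncard_eq_toFinset_card']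
      exact hreg v
    set A : Finset V := (G.neighborFinset v).filter (fun w => w ∈ S) with hA
    set B : Finset V := (G.neighborFinset v).filter (fun w => ¬ w ∈ S) with hB
    have hAB : A.card + B.card = r := by
      rw [hA, hB, Finset.card_filter_add_card_filter_not, hdeg]
    have hBsub : B ⊆ Cf.erase v := by
      intro w hw
      rw [hB, mem_filter, SimpleGraph.mem_neighborFinset] at hw
      obtain ⟨hadj, hwS⟩ := hw
      refine Finset.mem_erase.2 ⟨hadj.ne', (hmemCf w).2 ?_⟩
      exact hclosed v w ((hmemCf v).1 hv) hwS hadj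
    have hBcard : B.card ≤ y - 1 := by
      calc B.card ≤ (Cf.erase v).card := Finset.card_le_card hBsub
        _ = Cf.card - 1 := Finset.card_erase_of_mem hv
        _ = y - 1 := by rw [hCfcard]
    have hANs : A = Ns v := by
      ext w
      simp [hA, hNs, SimpleGraph.mem_neighborFinset, and_comm]
    rw [← hANs]
    omega
  have hsum : y * (r - y + 1) ≤ Tf.card := by
    rw [hcardT]
    calc y * (r - y + 1) = ∑ _v ∈ Cf, (r - y + 1) := by
          rw [Finset.sum_const, hCfcard, smul_eq_mul]
      _ ≤ ∑ v ∈ Cf, (Ns v).card := Finset.sum_le_sum hvert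
  have hmain : y * (r - y + 1) ≤
      {p : V × V | p.1 ∈ C' ∧ p.2 ∈ S ∧ G.Adj p.1 p.2}.ncard := by
    rw [hset, Set.ncard_coe_finset]
    exact hsum
  refine ⟨hmain, le_trans ?_ hmain⟩
  have h1 : y * (r - y + 1) = y * (r - y) + y := by ring
  have h2 : r - y ≤ y * (r - y) := Nat.le_mul_of_pos_left _ (by omega)
  omega
end
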